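/- Let D = (V,A) be a digraph. For every positive integer q, χ^≥_D(−q) = (−1)^{c} · N(q), where χ^≥_D is the weak-chromatic polynomial of D evaluated at −q, c is the number of strongly connected components of D, and N(q) is the number of q-colorings f : V → {1,…,q} that are constant on each strongly connected component of D and satisfy f(s(a)) < f(t(a)) for every arc a ∈ A that does not lie on a directed cycle (i.e., N(q) is the number of q-colorings with only strict ascents of the acyclic digraph acyc(D) obtained from D by contracting all cyclic arcs). -/

import Mathlib

/-- The arc `a` lies on some directed cycle of the digraph. -/
def IsCyclicArc {V A : Type} (s t : A → V) (a : A) : Prop :=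
  ∃ n : ℕ, 0 < n ∧ ∃ c : ZMod n → A,
    (∀ i, t (c i) = s (c (i + 1))) ∧ ∃ i, c i = a

/-- The setoid on vertices whose classes are the strongly connected components of the
digraph: `u ∼ v` iff each is reachable from the other by a directed path. -/
def sccSetoid {V A : Type} (s t : A → V) : Setoid V where
  r u v := Relation.ReflTransGen (fun x y => ∃ a, s a = x ∧ t a = y) u v ∧
           Relation.ReflTransGen (fun x y => ∃ a, s a = x ∧ t a = y) v u
  iseqv := ⟨fun _ => ⟨Relation.ReflTransGen.refl, Relation.ReflTransGen.refl⟩,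
    fun h => ⟨h.2, h.1⟩, fun h h' => ⟨h.1.trans h'.1, h'.2.trans h.2⟩⟩

namespace WCR

variable {V A : Type}

/-- The one-step relation of the digraph. -/
def Step (s t : A → V) (x y : V) : Prop := ∃ a, s a = x ∧ t a = y

/-- Reachability. -/
def Reach (s t : A → V) : V → V → Prop := Relation.ReflTransGen (Step s t)

lemma step_arc (s t : A → V) (a : A) : Step s t (s a) (t a) := ⟨a, rfl, rfl⟩

lemma reach_arc (s t : A → V) (a : A) : Reach s t (s a) (t a) :=
  Relation.ReflTransGen.single (step_arc s t a)

lemma scc_r_iff (s t : A → V) (u v : V) :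
    (sccSetoid s t).r u v ↔ Reach s t u v ∧ Reach s t v u := Iff.rfl

lemma isCyclicArc_iff (s t : A → V) (a : A) :
    IsCyclicArc s t a ↔ Reach s t (t a) (s a) := by
  constructor
  · rintro ⟨n, hn, c, hc, i0, rfl⟩
    have key : ∀ k : ℕ, Reach s t (s (c (i0 + 1))) (s (c (i0 + 1 + (k : ZMod n)))) := by
      intro k
      induction k with
      | zero => simpa using (show Reach s t (s (c (i0 + 1))) (s (c (i0 + 1))) from Relation.ReflTransGen.refl)
      | succ k ih =>
          have h1 : Reach s t (s (c (i0 + 1 + (k : ZMod n)))) (t (c (i0 + 1 + (k : ZMod n)))) :=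
            reach_arc s t _
          have h2 : t (c (i0 + 1 + (k : ZMod n))) = s (c (i0 + 1 + (k : ZMod n) + 1)) := hc _
          have hck : ((k+1 : ℕ) : ZMod n) = (k : ZMod n) + 1 := by push_cast; ring
          rw [hck, ← add_assoc]
          exact (ih.trans h1).trans (h2 ▸ Relation.ReflTransGen.refl)
    have hcast : (i0 + 1 + ((n - 1 : ℕ) : ZMod n)) = i0 := by
      have h1 : ((n - 1 : ℕ) : ZMod n) = (n : ZMod n) - 1 := by
        have := Nat.cast_sub (by omega : 1 ≤ n) (R := ZMod n)
        simpa using this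
      rw [h1, ZMod.natCast_self]
      ring
    have hkey := key (n - 1)
    rw [hcast] at hkey
    exact (hc i0 ▸ Relation.ReflTransGen.refl : Reach s t (t (c i0)) (s (c (i0 + 1)))).trans hkey
  · intro h
    classical
    obtain ⟨l, hchain, hlast⟩ := List.exists_isChain_cons_of_relationReflTransGen h
    -- extract arcs from the chain
    have extract : ∀ (x : V) (l : List V), List.IsChain (Step s t) (x :: l) →
        ∃ as : List A, as.length = l.length ∧
          (∀ i, i < l.length →
            s (as.getD i a) = (x :: l).getD i (t a) ∧
            t (as.getD i a) = l.getD i (t a)) := by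
      intro x l
      induction l generalizing x with
      | nil => intro _; exact ⟨[], rfl, fun i hi => by simp at hi⟩
      | cons y l' ih =>
          intro hch
          rcases List.isChain_cons_cons.1 hch with ⟨⟨a0, ha0s, ha0t⟩, hch'⟩
          obtain ⟨as', hlen', hprop'⟩ := ih y hch'
          refine ⟨a0 :: as', by simp [hlen'], ?_⟩
          intro i hi
          cases i with
          | zero => simpa using ⟨ha0s, ha0t⟩
          | succ j =>
              have hj : j < l'.length := by simpa using hi
              simpa using hprop' j hj
    obtain ⟨as, hlen, hprop⟩ := extract (t a) l hchain
    set n : ℕ := l.length + 1 with hn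
    have hnpos : 0 < n := by omega
    set F : ℕ → A := fun i => (as ++ [a]).getD i a with hF
    set G : ℕ → V := fun i => (t a :: l).getD i (t a) with hG
    have hFlt : ∀ i, i < l.length → F i = as.getD i a := by
      intro i hi
      simp only [hF]
      rw [List.getD_eq_getElem _ _ (by simp [hlen]; omega),
          List.getD_eq_getElem _ _ (by omega : i < as.length)]
      exact List.getElem_append_left (by omega)
    have hFlast : F l.length = a := by
      simp only [hF]
      rw [List.getD_eq_getElem _ _ (by simp [hlen])]
      exact List.getElem_concat_length (by omega) _
    have claim1 : ∀ i, i ≤ l.length → s (F i) = G i := by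
      intro i hi
      rcases Nat.lt_or_ge i l.length with h' | h'
      · rw [hFlt i h']
        exact (hprop i h').1
      · have : i = l.length := by omega
        subst this
        rw [hFlast]
        have : G l.length = (t a :: l).getLast (List.cons_ne_nil _ _) := by
          rw [List.getLast_eq_getElem]
          simp only [hG]
          rw [List.getD_eq_getElem _ _ (by simp)]
          simp
        rw [this, hlast]
    have claim2 : ∀ i, i ≤ l.length → t (F i) = G ((i+1) % n) := by
      intro i hi
      rcases Nat.lt_or_ge i l.length with h' | h'
      · have hmod : (i+1) % n = i+1 := Nat.mod_eq_of_lt (by omega)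
        rw [hmod, hFlt i h']
        have h2 := (hprop i h').2
        rw [h2]
        simp only [hG]
        rw [List.getD_cons_succ]
      · have hieq : i = l.length := by omega
        subst hieq
        have hmod : (l.length+1) % n = 0 := by simp [hn]
        rw [hmod, hFlast]
        simp [hG]
    haveI : NeZero n := ⟨by omega⟩
    refine ⟨n, hnpos, fun i => F (ZMod.val i), ?_, ?_⟩
    · intro i
      show t (F (ZMod.val i)) = s (F (ZMod.val (i + 1)))
      have hvali : ZMod.val i < n := ZMod.val_lt i
      have hval1 : ZMod.val (i + 1) = (ZMod.val i + 1) % n := by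
        rw [ZMod.val_add, ZMod.val_one_eq_one_mod]
        conv_rhs => rw [Nat.add_mod]
        rw [Nat.mod_eq_of_lt hvali]
      rw [claim2 _ (by omega), hval1,
          claim1 ((ZMod.val i + 1) % n) (by have := Nat.mod_lt (ZMod.val i + 1) hnpos; omega)]
    · refine ⟨(l.length : ZMod n), ?_⟩
      show F (ZMod.val ((l.length : ℕ) : ZMod n)) = a
      rw [ZMod.val_natCast_of_lt (by omega)]
      exact hFlast


section OneJump

variable {V A : Type} (s t : A → V) (u v : V)

/-- Source map of `D` plus one arc `u → v`. -/
def s1 : Option A → V := fun o => o.elim u s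
/-- Target map of `D` plus one arc `u → v`. -/
def t1 : Option A → V := fun o => o.elim v t

/-- Source map of `D` plus two arcs `u → v`, `v → u`. -/
def s3 : A ⊕ Bool → V := Sum.elim s (fun b => cond b u v)
/-- Target map of `D` plus two arcs `u → v`, `v → u`. -/
def t3 : A ⊕ Bool → V := Sum.elim t (fun b => cond b v u)

variable {s t u v}

lemma step1_iff {x y : V} :
    Step (s1 s u) (t1 t v) x y ↔ Step s t x y ∨ (x = u ∧ y = v) := by
  constructor
  · rintro ⟨(a | a), rfl, rfl⟩
    · exact Or.inr ⟨rfl, rfl⟩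
    · exact Or.inl ⟨a, rfl, rfl⟩
  · rintro (⟨a, rfl, rfl⟩ | ⟨rfl, rfl⟩)
    · exact ⟨some a, rfl, rfl⟩
    · exact ⟨none, rfl, rfl⟩

lemma step3_iff {x y : V} :
    Step (s3 s u v) (t3 t u v) x y ↔
      Step s t x y ∨ (x = u ∧ y = v) ∨ (x = v ∧ y = u) := by
  constructor
  · rintro ⟨(a | b), rfl, rfl⟩
    · exact Or.inl ⟨a, rfl, rfl⟩
    · cases b
      · exact Or.inr (Or.inr ⟨rfl, rfl⟩)
      · exact Or.inr (Or.inl ⟨rfl, rfl⟩)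
  · rintro (⟨a, rfl, rfl⟩ | ⟨rfl, rfl⟩ | ⟨rfl, rfl⟩)
    · exact ⟨Sum.inl a, rfl, rfl⟩
    · exact ⟨Sum.inr true, rfl, rfl⟩
    · exact ⟨Sum.inr false, rfl, rfl⟩

lemma reach_mono1 {x y : V} (h : Reach s t x y) : Reach (s1 s u) (t1 t v) x y :=
  Relation.ReflTransGen.mono (r := Step s t) (p := Step (s1 s u) (t1 t v)) (fun _ _ hs => step1_iff.2 (Or.inl hs)) _ _ h

lemma reach_mono3 {x y : V} (h : Reach s t x y) : Reach (s3 s u v) (t3 t u v) x y :=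
  Relation.ReflTransGen.mono (r := Step s t) (p := Step (s3 s u v) (t3 t u v)) (fun _ _ hs => step3_iff.2 (Or.inl hs)) _ _ h

lemma reach1_iff (hvu : ¬ Reach s t v u) {x y : V} :
    Reach (s1 s u) (t1 t v) x y ↔
      Reach s t x y ∨ (Reach s t x u ∧ Reach s t v y) := by
  constructor
  · intro h
    induction h with
    | refl => exact Or.inl Relation.ReflTransGen.refl
    | tail hxb hbc ih =>
        rcases step1_iff.1 hbc with hs | ⟨rfl, rfl⟩
        · rcases ih with h1 | ⟨h1, h2⟩
          · exact Or.inl (h1.tail hs)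
          · exact Or.inr ⟨h1, h2.tail hs⟩
        · rcases ih with h1 | ⟨h1, h2⟩
          · exact Or.inr ⟨h1, Relation.ReflTransGen.refl⟩
          · exact absurd h2 hvu
  · rintro (h | ⟨h1, h2⟩)
    · exact reach_mono1 h
    · exact ((reach_mono1 h1).tail (step1_iff.2 (Or.inr ⟨rfl, rfl⟩))).trans (reach_mono1 h2)

lemma reach3_iff (huv : ¬ Reach s t u v) (hvu : ¬ Reach s t v u) {x y : V} :
    Reach (s3 s u v) (t3 t u v) x y ↔
      Reach s t x y ∨ (Reach s t x u ∧ Reach s t v y) ∨ (Reach s t x v ∧ Reach s t u y) := by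
  constructor
  · intro h
    induction h with
    | refl => exact Or.inl Relation.ReflTransGen.refl
    | tail hxb hbc ih =>
        rcases step3_iff.1 hbc with hs | ⟨rfl, rfl⟩ | ⟨rfl, rfl⟩
        · rcases ih with h1 | ⟨h1, h2⟩ | ⟨h1, h2⟩
          · exact Or.inl (h1.tail hs)
          · exact Or.inr (Or.inl ⟨h1, h2.tail hs⟩)
          · exact Or.inr (Or.inr ⟨h1, h2.tail hs⟩)
        · rcases ih with h1 | ⟨h1, h2⟩ | ⟨h1, h2⟩
          · exact Or.inr (Or.inl ⟨h1, Relation.ReflTransGen.refl⟩)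
          · exact absurd h2 hvu
          · exact Or.inl h1
        · rcases ih with h1 | ⟨h1, h2⟩ | ⟨h1, h2⟩
          · exact Or.inr (Or.inr ⟨h1, Relation.ReflTransGen.refl⟩)
          · exact Or.inl h1
          · exact absurd h2 huv
  · rintro (h | ⟨h1, h2⟩ | ⟨h1, h2⟩)
    · exact reach_mono3 h
    · exact ((reach_mono3 h1).tail (step3_iff.2 (Or.inr (Or.inl ⟨rfl, rfl⟩)))).trans
        (reach_mono3 h2)
    · exact ((reach_mono3 h1).tail (step3_iff.2 (Or.inr (Or.inr ⟨rfl, rfl⟩)))).trans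
        (reach_mono3 h2)

lemma scc1_iff (hvu : ¬ Reach s t v u) {x y : V} :
    (sccSetoid (s1 s u) (t1 t v)).r x y ↔ (sccSetoid s t).r x y := by
  rw [scc_r_iff, scc_r_iff, reach1_iff hvu, reach1_iff hvu]
  constructor
  · rintro ⟨(hxy | ⟨hxu, hvy⟩), (hyx | ⟨hyu, hvx⟩)⟩
    · exact ⟨hxy, hyx⟩
    · exact absurd ((hvx.trans hxy).trans hyu) hvu
    · exact absurd ((hvy.trans hyx).trans hxu) hvu
    · exact absurd (hvx.trans hxu) hvu
  · rintro ⟨h1, h2⟩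
    exact ⟨Or.inl h1, Or.inl h2⟩

lemma cyc1_some (hvu : ¬ Reach s t v u) {a : A} :
    IsCyclicArc (s1 s u) (t1 t v) (some a) ↔ IsCyclicArc s t a := by
  rw [isCyclicArc_iff, isCyclicArc_iff]
  show Reach (s1 s u) (t1 t v) (t a) (s a) ↔ _
  rw [reach1_iff hvu]
  constructor
  · rintro (h | ⟨h1, h2⟩)
    · exact h
    · exact absurd ((h2.tail (step_arc s t a)).trans h1) hvu
  · exact Or.inl

lemma cyc1_none (hvu : ¬ Reach s t v u) :
    ¬ IsCyclicArc (s1 s u) (t1 t v) none := by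
  rw [isCyclicArc_iff]
  show ¬ Reach (s1 s u) (t1 t v) v u
  rw [reach1_iff hvu]
  rintro (h | ⟨h1, h2⟩)
  · exact hvu h
  · exact hvu h1

lemma scc3_iff (huv : ¬ Reach s t u v) (hvu : ¬ Reach s t v u) {x y : V} :
    (sccSetoid (s3 s u v) (t3 t u v)).r x y ↔
      (sccSetoid s t).r x y ∨
        ((sccSetoid s t).r x u ∧ (sccSetoid s t).r y v) ∨
        ((sccSetoid s t).r x v ∧ (sccSetoid s t).r y u) := by
  simp only [scc_r_iff]
  rw [reach3_iff huv hvu, reach3_iff huv hvu]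
  constructor
  · rintro ⟨(h1 | ⟨h1, h2⟩ | ⟨h1, h2⟩), (h1' | ⟨h1', h2'⟩ | ⟨h1', h2'⟩)⟩
    · exact Or.inl ⟨h1, h1'⟩
    · exact absurd ((h2'.trans h1).trans h1') hvu
    · exact absurd ((h2'.trans h1).trans h1') huv
    · exact absurd ((h2.trans h1').trans h1) hvu
    · exact absurd (h2'.trans h1) hvu
    · exact Or.inr (Or.inl ⟨⟨h1, h2'⟩, ⟨h1', h2⟩⟩)
    · exact absurd ((h2.trans h1').trans h1) huv
    · exact Or.inr (Or.inr ⟨⟨h1, h2'⟩, ⟨h1', h2⟩⟩)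
    · exact absurd (h2'.trans h1) huv
  · rintro (⟨h1, h2⟩ | ⟨⟨h1, h2⟩, ⟨h3, h4⟩⟩ | ⟨⟨h1, h2⟩, ⟨h3, h4⟩⟩)
    · exact ⟨Or.inl h1, Or.inl h2⟩
    · exact ⟨Or.inr (Or.inl ⟨h1, h4⟩), Or.inr (Or.inr ⟨h3, h2⟩)⟩
    · exact ⟨Or.inr (Or.inr ⟨h1, h4⟩), Or.inr (Or.inl ⟨h3, h2⟩)⟩

lemma cyc3_inl (huv : ¬ Reach s t u v) (hvu : ¬ Reach s t v u) {a : A} :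
    IsCyclicArc (s3 s u v) (t3 t u v) (Sum.inl a) ↔ IsCyclicArc s t a := by
  rw [isCyclicArc_iff, isCyclicArc_iff]
  show Reach (s3 s u v) (t3 t u v) (t a) (s a) ↔ _
  rw [reach3_iff huv hvu]
  constructor
  · rintro (h | ⟨h1, h2⟩ | ⟨h1, h2⟩)
    · exact h
    · exact absurd ((h2.tail (step_arc s t a)).trans h1) hvu
    · exact absurd ((h2.tail (step_arc s t a)).trans h1) huv
  · exact Or.inl

lemma cyc3_inr (huv : ¬ Reach s t u v) (hvu : ¬ Reach s t v u) (b : Bool) :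
    IsCyclicArc (s3 s u v) (t3 t u v) (Sum.inr b) := by
  rw [isCyclicArc_iff]
  cases b
  · show Reach (s3 s u v) (t3 t u v) u v
    rw [reach3_iff huv hvu]
    exact Or.inr (Or.inl ⟨Relation.ReflTransGen.refl, Relation.ReflTransGen.refl⟩)
  · show Reach (s3 s u v) (t3 t u v) v u
    rw [reach3_iff huv hvu]
    exact Or.inr (Or.inr ⟨Relation.ReflTransGen.refl, Relation.ReflTransGen.refl⟩)

lemma card_quot1 (hvu : ¬ Reach s t v u) :
    Nat.card (Quotient (sccSetoid (s1 s u) (t1 t v))) =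
      Nat.card (Quotient (sccSetoid s t)) :=
  Nat.card_congr (Quotient.congrRight (fun _ _ => scc1_iff hvu))

lemma card_quot3 [Finite V] (huv : ¬ Reach s t u v) (hvu : ¬ Reach s t v u) :
    Nat.card (Quotient (sccSetoid s t)) =
      Nat.card (Quotient (sccSetoid (s3 s u v) (t3 t u v))) + 1 := by
  classical
  set S := sccSetoid s t
  set S3 := sccSetoid (s3 s u v) (t3 t u v)
  have huvne : ¬ S.r u v := fun h => huv h.1
  -- the map to the subtype
  have hne : (Quotient.mk S u) ≠ (Quotient.mk S v) := fun h => huvne (Quotient.eq.1 h)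
  set F : V → {w : Quotient S // w ≠ Quotient.mk S v} := fun x =>
    if h : S.r x v then ⟨Quotient.mk S u, hne⟩
    else ⟨Quotient.mk S x, fun hq => h (Quotient.eq.1 hq)⟩ with hF
  have hresp : ∀ x y, S3.r x y → F x = F y := by
    intro x y h3
    rcases (scc3_iff huv hvu).1 h3 with h | ⟨h1, h2⟩ | ⟨h1, h2⟩
    · by_cases hxv : S.r x v
      · simp only [hF]; rw [dif_pos hxv, dif_pos (show S.r y v from S.trans (S.symm h) hxv)]
      · have hyv : ¬ S.r y v := fun hy => hxv (S.trans h hy)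
        simp only [hF]; rw [dif_neg hxv, dif_neg hyv]
        exact Subtype.ext (Quotient.sound h)
    · -- x ~ u, y ~ v
      have hxv : ¬ S.r x v := fun hx => huvne (S.trans (S.symm h1) hx)
      simp only [hF]; rw [dif_neg hxv, dif_pos (show S.r y v from h2)]
      exact Subtype.ext (Quotient.sound h1)
    · -- x ~ v, y ~ u
      have hyv : ¬ S.r y v := fun hy => huvne (S.trans (S.symm h2) hy)
      simp only [hF]; rw [dif_pos (show S.r x v from h1), dif_neg hyv]
      exact (Subtype.ext (Quotient.sound h2)).symm
  set G : Quotient S3 → {w : Quotient S // w ≠ Quotient.mk S v} := Quotient.lift F hresp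
  set H : {w : Quotient S // w ≠ Quotient.mk S v} → Quotient S3 := fun w =>
    Quotient.lift (fun x => Quotient.mk S3 x)
      (fun x y hxy => Quotient.sound ((scc3_iff huv hvu).2 (Or.inl hxy))) w.1 with hH
  have hGH : Function.LeftInverse H G := by
    intro w
    induction w using Quotient.ind with
    | _ x =>
        show H (F x) = Quotient.mk S3 x
        simp only [hF]
        by_cases hxv : S.r x v
        · rw [dif_pos hxv]
          show Quotient.mk S3 u = Quotient.mk S3 x
          exact Quotient.sound ((scc3_iff huv hvu).2
            (Or.inr (Or.inl ⟨S.refl u, hxv⟩)))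
        · rw [dif_neg hxv]
          rfl
  have hHG : Function.RightInverse H G := by
    rintro ⟨w, hw⟩
    induction w using Quotient.ind with
    | _ x =>
        have hxv : ¬ S.r x v := fun h => hw (Quotient.sound h)
        show F x = _
        simp only [hF]
        rw [dif_neg hxv]
  have e : Quotient S3 ≃ {w : Quotient S // w ≠ Quotient.mk S v} :=
    ⟨G, H, hGH, hHG⟩
  have e2 : Option (Quotient S3) ≃ Quotient S := by
    refine (Equiv.optionCongr e).trans ?_
    exact Equiv.optionSubtypeNe (Quotient.mk S v)
  haveI : Finite (Quotient S3) := Quotient.finite _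
  haveI : Fintype (Quotient S3) := Fintype.ofFinite _
  rw [← Nat.card_congr e2, Nat.card_eq_fintype_card, Fintype.card_option,
    Nat.card_eq_fintype_card]

end OneJump


section Counting

lemma card_eq_of_iff {F : Type} {P Q : F → Prop} (h : ∀ x, P x ↔ Q x) :
    Nat.card {x // P x} = Nat.card {x // Q x} :=
  Nat.card_congr (Equiv.subtypeEquivRight h)

lemma card_or_disjoint {F : Type} [Finite F] {P Q : F → Prop} (h : ∀ x, ¬ (P x ∧ Q x)) :
    Nat.card {x // P x ∨ Q x} = Nat.card {x // P x} + Nat.card {x // Q x} := by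
  classical
  haveI : Fintype F := Fintype.ofFinite F
  simp only [Nat.card_eq_fintype_card]
  refine Fintype.card_subtype_or_disjoint _ _ ?_
  rintro R hRP hRQ x hx
  exact absurd ⟨hRP x hx, hRQ x hx⟩ (h x)

lemma card_trichotomy {F : Type} [Finite F] {γ : Type} [LinearOrder γ]
    (P : F → Prop) (g h : F → γ) :
    Nat.card {x // P x} =
      Nat.card {x // P x ∧ g x < h x} + Nat.card {x // P x ∧ h x < g x} +
        Nat.card {x // P x ∧ g x = h x} := by
  have h1 : ∀ x, P x ↔ ((P x ∧ g x < h x) ∨ ((P x ∧ h x < g x) ∨ (P x ∧ g x = h x))) := by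
    intro x
    constructor
    · intro hp
      rcases lt_trichotomy (g x) (h x) with h' | h' | h'
      · exact Or.inl ⟨hp, h'⟩
      · exact Or.inr (Or.inr ⟨hp, h'⟩)
      · exact Or.inr (Or.inl ⟨hp, h'⟩)
    · rintro (⟨hp, _⟩ | ⟨hp, _⟩ | ⟨hp, _⟩) <;> exact hp
  rw [card_eq_of_iff h1, card_or_disjoint, card_or_disjoint]
  · ring
  · rintro x ⟨⟨_, h1'⟩, ⟨_, h2'⟩⟩
    exact absurd h2'.symm (ne_of_lt h1')
  · rintro x ⟨⟨_, h1'⟩, (⟨_, h2'⟩ | ⟨_, h2'⟩)⟩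
    · exact absurd h1' (lt_asymm h2')
    · exact absurd h2' (ne_of_lt h1')

lemma card_le_split {F : Type} [Finite F] {γ : Type} [LinearOrder γ]
    (P : F → Prop) (g h : F → γ) :
    Nat.card {x // P x ∧ g x ≤ h x} =
      Nat.card {x // P x ∧ g x < h x} + Nat.card {x // P x ∧ g x = h x} := by
  have h1 : ∀ x, (P x ∧ g x ≤ h x) ↔ ((P x ∧ g x < h x) ∨ (P x ∧ g x = h x)) := by
    intro x
    constructor
    · rintro ⟨hp, hle⟩
      rcases lt_or_eq_of_le hle with h' | h'
      · exact Or.inl ⟨hp, h'⟩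
      · exact Or.inr ⟨hp, h'⟩
    · rintro (⟨hp, h'⟩ | ⟨hp, h'⟩)
      · exact ⟨hp, le_of_lt h'⟩
      · exact ⟨hp, le_of_eq h'⟩
  rw [card_eq_of_iff h1, card_or_disjoint]
  rintro x ⟨⟨_, h1'⟩, ⟨_, h2'⟩⟩
  exact absurd h2' (ne_of_lt h1')

/-- Inclusion-exclusion for the weak side. -/
lemma card_incl_excl {F : Type} [Finite F] {γ : Type} [LinearOrder γ]
    (P : F → Prop) (g h : F → γ) :
    Nat.card {x // P x} + Nat.card {x // P x ∧ g x = h x} =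
      Nat.card {x // P x ∧ g x ≤ h x} + Nat.card {x // P x ∧ h x ≤ g x} := by
  have t1 := card_trichotomy P g h
  have t2 := card_le_split P g h
  have t3 := card_le_split P h g
  have t4 : Nat.card {x // P x ∧ h x = g x} = Nat.card {x // P x ∧ g x = h x} :=
    card_eq_of_iff (fun x => by constructor <;> rintro ⟨hp, h'⟩ <;> exact ⟨hp, h'.symm⟩)
  omega

/-- Key auxiliary inequality for strictly monotone maps between `Fin` types. -/
lemma strictMono_val_add_le {c N : ℕ} {g : Fin c → Fin N} (hg : StrictMono g) :
    ∀ (d : ℕ) (i j : Fin c), i.val + d = j.val → (g i).val + d ≤ (g j).val := by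
  intro d
  induction d with
  | zero =>
      intro i j hij
      have : i = j := Fin.ext (by omega)
      subst this
      omega
  | succ d ih =>
      intro i j hij
      have hj' : i.val + d < c := by have := j.isLt; omega
      set j' : Fin c := ⟨i.val + d, hj'⟩ with hj'def
      have h1 : (g i).val + d ≤ (g j').val := ih i j' rfl
      have h2 : g j' < g j := hg (by rw [Fin.lt_def]; simp [hj'def]; omega)
      rw [Fin.lt_def] at h2
      omega

lemma card_strictMono_fin (c q : ℕ) :
    Nat.card {f : Fin c → Fin q // StrictMono f} = q.choose c := by
  classical
  have e : {f : Fin c → Fin q // StrictMono f} ≃ {s : Finset (Fin q) // s.card = c} :=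
    { toFun := fun f => ⟨Finset.univ.image f.1, by
        rw [Finset.card_image_of_injective _ f.2.injective, Finset.card_univ,
          Fintype.card_fin]⟩
      invFun := fun s => ⟨s.1.orderEmbOfFin s.2, (s.1.orderEmbOfFin s.2).strictMono⟩
      left_inv := by
        rintro ⟨f, hf⟩
        apply Subtype.ext
        exact (Finset.orderEmbOfFin_unique _
          (fun x => Finset.mem_image_of_mem f (Finset.mem_univ x)) hf).symm
      right_inv := by
        rintro ⟨s, hs⟩
        apply Subtype.ext
        apply Finset.coe_injective
        show ((Finset.univ.image (s.orderEmbOfFin hs) : Finset (Fin q)) : Set (Fin q)) = _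
        rw [Finset.coe_image, Finset.coe_univ, Set.image_univ,
          Finset.range_orderEmbOfFin] }
  rw [Nat.card_congr e, Nat.card_eq_fintype_card, Fintype.card_finset_len,
    Fintype.card_fin]

lemma card_monotone_fin (c q : ℕ) (hq : 0 < q) :
    Nat.card {f : Fin c → Fin q // Monotone f} =
      Nat.card {f : Fin c → Fin (q + c - 1) // StrictMono f} := by
  refine Nat.card_congr ?_
  refine
    { toFun := fun f => ⟨fun i => ⟨(f.1 i).val + i.val, by
        have h1 := (f.1 i).isLt
        have h2 := i.isLt
        omega⟩, ?_⟩
      invFun := fun g => ⟨fun i => ⟨(g.1 i).val - i.val, ?_⟩, ?_⟩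
      left_inv := ?_
      right_inv := ?_ }
  · -- strict mono of forward
    intro i j hij
    have h1 : f.1 i ≤ f.1 j := f.2 (le_of_lt hij)
    rw [Fin.lt_def] at hij ⊢
    rw [Fin.le_def] at h1
    simp only
    omega
  · -- bound for inverse
    have hlast : i.val + (c - 1 - i.val) = (⟨c - 1, by have := i.isLt; omega⟩ : Fin c).val := by
      simp only
      have := i.isLt
      omega
    have h1 := strictMono_val_add_le g.2 (c - 1 - i.val) i ⟨c - 1, by have := i.isLt; omega⟩ hlast
    have h2 := (g.1 ⟨c - 1, by have := i.isLt; omega⟩).isLt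
    have h3 := i.isLt
    omega
  · -- monotone of inverse
    intro i j hij
    rw [Fin.le_def] at hij ⊢
    have h1 := strictMono_val_add_le g.2 (j.val - i.val) i j (by omega)
    simp only
    omega
  · rintro ⟨f, hf⟩
    apply Subtype.ext
    funext i
    apply Fin.ext
    simp only
    omega
  · rintro ⟨g, hg⟩
    apply Subtype.ext
    funext i
    apply Fin.ext
    simp only
    have h1 := strictMono_val_add_le hg i.val ⟨0, i.pos⟩ i (by simp)
    omega

lemma card_mono_congr {α β γ : Type} [Preorder α] [Preorder β] [Preorder γ] (e : α ≃o β) :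
    Nat.card {g : β → γ // Monotone g} = Nat.card {g : α → γ // Monotone g} :=
  Nat.card_congr
    { toFun := fun g => ⟨g.1 ∘ e, g.2.comp e.monotone⟩
      invFun := fun g => ⟨g.1 ∘ e.symm, g.2.comp e.symm.monotone⟩
      left_inv := by
        rintro ⟨g, hg⟩
        apply Subtype.ext
        funext x
        simp
      right_inv := by
        rintro ⟨g, hg⟩
        apply Subtype.ext
        funext x
        simp }

lemma card_strict_congr {α β γ : Type} [Preorder α] [Preorder β] [Preorder γ] (e : α ≃o β) :
    Nat.card {g : β → γ // StrictMono g} = Nat.card {g : α → γ // StrictMono g} :=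
  Nat.card_congr
    { toFun := fun g => ⟨g.1 ∘ e, g.2.comp e.strictMono⟩
      invFun := fun g => ⟨g.1 ∘ e.symm, g.2.comp e.symm.strictMono⟩
      left_inv := by
        rintro ⟨g, hg⟩
        apply Subtype.ext
        funext x
        simp
      right_inv := by
        rintro ⟨g, hg⟩
        apply Subtype.ext
        funext x
        simp }

end Counting


section Base

variable {V A : Type} {s t : A → V}

lemma reach_le {q : ℕ} {f : V → Fin q} (hf : ∀ a, f (s a) ≤ f (t a)) {x y : V}
    (h : Reach s t x y) : f x ≤ f y := by
  induction h with
  | refl => exact le_refl _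
  | tail hxb hbc ih =>
      obtain ⟨a, rfl, rfl⟩ := hbc
      exact le_trans ih (hf a)

lemma strict_reach {q : ℕ} {f : V → Fin q}
    (hconst : ∀ x y, (sccSetoid s t).r x y → f x = f y)
    (hstrict : ∀ a, ¬ IsCyclicArc s t a → f (s a) < f (t a)) {x y : V} (h : Reach s t x y) :
    f x ≤ f y ∧ (¬ Reach s t y x → f x < f y) := by
  induction h with
  | refl => exact ⟨le_refl _, fun h => absurd Relation.ReflTransGen.refl h⟩
  | tail hxb hbc ih =>
      obtain ⟨a, rfl, rfl⟩ := hbc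
      by_cases hcyc : IsCyclicArc s t a
      · have hba : Reach s t (t a) (s a) := (isCyclicArc_iff s t a).1 hcyc
        have heq : f (s a) = f (t a) := hconst _ _ ⟨reach_arc s t a, hba⟩
        refine ⟨ih.1.trans heq.le, fun hnr => ?_⟩
        have hnx : ¬ Reach s t (s a) x := fun hr => hnr (hba.trans hr)
        exact lt_of_lt_of_le (ih.2 hnx) heq.le
      · have hlt := hstrict a hcyc
        exact ⟨ih.1.trans hlt.le, fun _ => lt_of_le_of_lt ih.1 hlt⟩

lemma base_case (V A : Type) [Fintype V] (s t : A → V)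
    (htot : ∀ x y : V, Reach s t x y ∨ Reach s t y x) :
    ∃ p : Polynomial ℚ,
      (∀ q : ℕ, 0 < q → p.eval (q : ℚ) =
        (Nat.card {f : V → Fin q // ∀ a : A, f (s a) ≤ f (t a)} : ℚ)) ∧
      (∀ q : ℕ, 0 < q → p.eval (-(q : ℚ)) =
        (-1 : ℚ) ^ (Nat.card (Quotient (sccSetoid s t))) *
          (Nat.card {f : V → Fin q //
            (∀ u v : V, (sccSetoid s t).r u v → f u = f v) ∧
            (∀ a : A, ¬ IsCyclicArc s t a → f (s a) < f (t a))} : ℚ)) := by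
  classical
  letI po : PartialOrder (Quotient (sccSetoid s t)) :=
    { le := Quotient.lift₂ (fun x y => Reach s t x y) (by
        intro x y x' y' hx hy
        apply propext
        constructor
        · intro h; exact (hx.2.trans h).trans hy.1
        · intro h; exact (hx.1.trans h).trans hy.2)
      le_refl := fun w => Quotient.inductionOn w (fun x => Relation.ReflTransGen.refl)
      le_trans := fun w1 w2 w3 => Quotient.inductionOn₃ w1 w2 w3
        (fun x y z hxy hyz => Relation.ReflTransGen.trans hxy hyz)
      le_antisymm := fun w1 w2 => Quotient.inductionOn₂ w1 w2
        (fun x y hxy hyx => Quotient.sound ⟨hxy, hyx⟩) }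
  letI lo : LinearOrder (Quotient (sccSetoid s t)) :=
    { po with
      le_total := fun w1 w2 => Quotient.inductionOn₂ w1 w2 (fun x y => htot x y)
      toDecidableLE := fun _ _ => Classical.dec _ }
  haveI : Finite (Quotient (sccSetoid s t)) := Quotient.finite _
  haveI : Fintype (Quotient (sccSetoid s t)) := Fintype.ofFinite _
  set c := Nat.card (Quotient (sccSetoid s t)) with hc
  have hcard : Fintype.card (Quotient (sccSetoid s t)) = c := by
    rw [hc, Nat.card_eq_fintype_card]
  have e : Fin c ≃o Quotient (sccSetoid s t) := monoEquivOfFin _ hcard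
  -- weak colorings are monotone maps on the quotient
  have eW : ∀ q : ℕ, {f : V → Fin q // ∀ a : A, f (s a) ≤ f (t a)} ≃
      {g : Quotient (sccSetoid s t) → Fin q // Monotone g} := by
    intro q
    refine
      { toFun := fun f => ⟨Quotient.lift f.1 (fun x y h =>
          le_antisymm (reach_le f.2 h.1) (reach_le f.2 h.2)), ?_⟩
        invFun := fun g => ⟨g.1 ∘ Quotient.mk (sccSetoid s t),
          fun a => g.2 (show (Quotient.mk (sccSetoid s t) (s a)) ≤
            (Quotient.mk (sccSetoid s t) (t a)) from reach_arc s t a)⟩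
        left_inv := ?_
        right_inv := ?_ }
    · intro w1 w2 hle
      induction w1 using Quotient.ind with
      | _ x =>
        induction w2 using Quotient.ind with
        | _ y => exact reach_le f.2 hle
    · rintro ⟨f, hf⟩
      apply Subtype.ext
      rfl
    · rintro ⟨g, hg⟩
      apply Subtype.ext
      funext w
      induction w using Quotient.ind with
      | _ x => rfl
  have eN : ∀ q : ℕ, {f : V → Fin q //
      (∀ u v : V, (sccSetoid s t).r u v → f u = f v) ∧
      (∀ a : A, ¬ IsCyclicArc s t a → f (s a) < f (t a))} ≃
      {g : Quotient (sccSetoid s t) → Fin q // StrictMono g} := by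
    intro q
    refine
      { toFun := fun f => ⟨Quotient.lift f.1 (fun x y h => f.2.1 x y h), ?_⟩
        invFun := fun g => ⟨g.1 ∘ Quotient.mk (sccSetoid s t),
          fun x y h => congrArg g.1 (Quotient.sound h),
          fun a ha => g.2 (show (Quotient.mk (sccSetoid s t) (s a)) <
            (Quotient.mk (sccSetoid s t) (t a)) from
            lt_iff_le_not_ge.2 ⟨reach_arc s t a,
              fun hge => ha ((isCyclicArc_iff s t a).2 hge)⟩)⟩
        left_inv := ?_
        right_inv := ?_ }
    · intro w1 w2 hlt
      induction w1 using Quotient.ind with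
      | _ x =>
        induction w2 using Quotient.ind with
        | _ y =>
          rcases lt_iff_le_not_ge.1 hlt with ⟨hle, hnle⟩
          exact (strict_reach f.2.1 f.2.2 hle).2 hnle
    · rintro ⟨f, hf⟩
      apply Subtype.ext
      rfl
    · rintro ⟨g, hg⟩
      apply Subtype.ext
      funext w
      induction w using Quotient.ind with
      | _ x => rfl
  have cW : ∀ q : ℕ, 0 < q →
      Nat.card {f : V → Fin q // ∀ a : A, f (s a) ≤ f (t a)} = (q + c - 1).choose c := by
    intro q hq
    rw [Nat.card_congr (eW q), card_mono_congr e, card_monotone_fin c q hq,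
      card_strictMono_fin]
  have cN : ∀ q : ℕ,
      Nat.card {f : V → Fin q //
        (∀ u v : V, (sccSetoid s t).r u v → f u = f v) ∧
        (∀ a : A, ¬ IsCyclicArc s t a → f (s a) < f (t a))} = q.choose c := by
    intro q
    rw [Nat.card_congr (eN q), card_strict_congr e, card_strictMono_fin]
  refine ⟨Polynomial.C ((c.factorial : ℚ)⁻¹) * ascPochhammer ℚ c, ?_, ?_⟩
  · intro q hq
    rw [cW q hq]
    rw [Polynomial.eval_mul, Polynomial.eval_C]
    have h1 : (ascPochhammer ℚ c).eval ((q : ℕ) : ℚ) = (q.ascFactorial c : ℚ) := by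
      rw [← ascPochhammer_eval_cast, ascPochhammer_nat_eq_ascFactorial]
    rw [h1, Nat.ascFactorial_eq_factorial_mul_choose']
    have hne : (c.factorial : ℚ) ≠ 0 := Nat.cast_ne_zero.2 c.factorial_ne_zero
    field_simp
    try ring
    exact Nat.cast_mul _ _
  · intro q hq
    rw [cN q]
    rw [Polynomial.eval_mul, Polynomial.eval_C,
      ascPochhammer_eval_neg_eq_descPochhammer,
      descPochhammer_eval_eq_descFactorial,
      Nat.descFactorial_eq_factorial_mul_choose]
    have hne : (c.factorial : ℚ) ≠ 0 := Nat.cast_ne_zero.2 c.factorial_ne_zero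
    field_simp
    try ring
    exact Nat.cast_mul _ _

end Base


section Main

variable {V : Type}

lemma measure_lt [Finite V] {A B : Type} {s t : A → V} {sB : B → V} {tB : B → V} {u v : V}
    (hmono : ∀ x y, Reach s t x y → Reach sB tB x y)
    (hnew : Reach sB tB u v) (hold : ¬ Reach s t u v) :
    Nat.card {p : V × V // ¬ Reach sB tB p.1 p.2} <
      Nat.card {p : V × V // ¬ Reach s t p.1 p.2} := by
  have h1 : Nat.card {p : V × V // ¬ Reach sB tB p.1 p.2} =
      Set.ncard {p : V × V | ¬ Reach sB tB p.1 p.2} :=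
    Nat.card_coe_set_eq _
  have h2 : Nat.card {p : V × V // ¬ Reach s t p.1 p.2} =
      Set.ncard {p : V × V | ¬ Reach s t p.1 p.2} :=
    Nat.card_coe_set_eq _
  rw [h1, h2]
  refine Set.ncard_lt_ncard ?_ (Set.toFinite _)
  rw [Set.ssubset_def]
  constructor
  · rintro ⟨x, y⟩ h hr
    exact h (hmono x y hr)
  · intro h
    exact (h (show ((u, v) : V × V) ∈ {p : V × V | ¬ Reach s t p.1 p.2} from hold)) hnew

lemma key (V : Type) [Fintype V] :
    ∀ (n : ℕ) (A : Type) (s t : A → V),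
      Nat.card {p : V × V // ¬ Reach s t p.1 p.2} ≤ n →
      ∃ p : Polynomial ℚ,
        (∀ q : ℕ, 0 < q → p.eval (q : ℚ) =
          (Nat.card {f : V → Fin q // ∀ a : A, f (s a) ≤ f (t a)} : ℚ)) ∧
        (∀ q : ℕ, 0 < q → p.eval (-(q : ℚ)) =
          (-1 : ℚ) ^ (Nat.card (Quotient (sccSetoid s t))) *
            (Nat.card {f : V → Fin q //
              (∀ u v : V, (sccSetoid s t).r u v → f u = f v) ∧
              (∀ a : A, ¬ IsCyclicArc s t a → f (s a) < f (t a))} : ℚ)) := by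
  intro n
  induction n with
  | zero =>
      intro A s t hm
      refine base_case V A s t ?_
      intro x y
      by_contra hcon
      push_neg at hcon
      have : Nat.card {p : V × V // ¬ Reach s t p.1 p.2} ≠ 0 := by
        have hne : Nonempty {p : V × V // ¬ Reach s t p.1 p.2} := ⟨⟨(x, y), hcon.1⟩⟩
        haveI : Finite {p : V × V // ¬ Reach s t p.1 p.2} := Subtype.finite
        rw [Nat.card_ne_zero]
        exact ⟨hne, this⟩
      omega
  | succ n ih =>
      intro A s t hm
      by_cases htot : ∀ x y : V, Reach s t x y ∨ Reach s t y x
      · exact base_case V A s t htot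
      · push_neg at htot
        obtain ⟨u, v, huv, hvu⟩ := htot
        -- the three augmented digraphs
        have hm1 : Nat.card {p : V × V // ¬ Reach (s1 s u) (t1 t v) p.1 p.2} ≤ n := by
          have := measure_lt (fun x y h => reach_mono1 (u := u) (v := v) h)
            (((reach1_iff hvu).2 (Or.inr ⟨Relation.ReflTransGen.refl,
              Relation.ReflTransGen.refl⟩)) : Reach (s1 s u) (t1 t v) u v) huv
          omega
        have hm2 : Nat.card {p : V × V // ¬ Reach (s1 s v) (t1 t u) p.1 p.2} ≤ n := by
          have := measure_lt (fun x y h => reach_mono1 (u := v) (v := u) h)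
            (((reach1_iff huv).2 (Or.inr ⟨Relation.ReflTransGen.refl,
              Relation.ReflTransGen.refl⟩)) : Reach (s1 s v) (t1 t u) v u) hvu
          omega
        have hm3 : Nat.card {p : V × V // ¬ Reach (s3 s u v) (t3 t u v) p.1 p.2} ≤ n := by
          have := measure_lt (fun x y h => reach_mono3 (u := u) (v := v) h)
            (((reach3_iff huv hvu).2 (Or.inr (Or.inl ⟨Relation.ReflTransGen.refl,
              Relation.ReflTransGen.refl⟩))) : Reach (s3 s u v) (t3 t u v) u v) huv
          omega
        obtain ⟨p1, hp1pos, hp1neg⟩ := ih (Option A) (s1 s u) (t1 t v) hm1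
        obtain ⟨p2, hp2pos, hp2neg⟩ := ih (Option A) (s1 s v) (t1 t u) hm2
        obtain ⟨p3, hp3pos, hp3neg⟩ := ih (A ⊕ Bool) (s3 s u v) (t3 t u v) hm3
        -- weak predicates
        have hW1 : ∀ q : ℕ,
            Nat.card {f : V → Fin q // ∀ o : Option A, f (s1 s u o) ≤ f (t1 t v o)} =
            Nat.card {f : V → Fin q // (∀ a : A, f (s a) ≤ f (t a)) ∧ f u ≤ f v} := by
          intro q
          refine card_eq_of_iff (fun f => ?_)
          constructor
          · intro h
            exact ⟨fun a => h (some a), h none⟩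
          · rintro ⟨h1, h2⟩ (a | a)
            · exact h2
            · exact h1 a
        have hW2 : ∀ q : ℕ,
            Nat.card {f : V → Fin q // ∀ o : Option A, f (s1 s v o) ≤ f (t1 t u o)} =
            Nat.card {f : V → Fin q // (∀ a : A, f (s a) ≤ f (t a)) ∧ f v ≤ f u} := by
          intro q
          refine card_eq_of_iff (fun f => ?_)
          constructor
          · intro h
            exact ⟨fun a => h (some a), h none⟩
          · rintro ⟨h1, h2⟩ (a | a)
            · exact h2
            · exact h1 a
        have hW3 : ∀ q : ℕ,
            Nat.card {f : V → Fin q // ∀ b : A ⊕ Bool, f (s3 s u v b) ≤ f (t3 t u v b)} =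
            Nat.card {f : V → Fin q // (∀ a : A, f (s a) ≤ f (t a)) ∧ f u = f v} := by
          intro q
          refine card_eq_of_iff (fun f => ?_)
          constructor
          · intro h
            exact ⟨fun a => h (Sum.inl a), le_antisymm (h (Sum.inr true)) (h (Sum.inr false))⟩
          · rintro ⟨h1, h2⟩ (a | b)
            · exact h1 a
            · cases b
              · exact le_of_eq h2.symm
              · exact le_of_eq h2
        -- strict (acyclic) predicates
        have hN1 : ∀ q : ℕ,
            Nat.card {f : V → Fin q //
              (∀ x y : V, (sccSetoid (s1 s u) (t1 t v)).r x y → f x = f y) ∧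
              (∀ o : Option A, ¬ IsCyclicArc (s1 s u) (t1 t v) o →
                f (s1 s u o) < f (t1 t v o))} =
            Nat.card {f : V → Fin q //
              ((∀ x y : V, (sccSetoid s t).r x y → f x = f y) ∧
               (∀ a : A, ¬ IsCyclicArc s t a → f (s a) < f (t a))) ∧ f u < f v} := by
          intro q
          refine card_eq_of_iff (fun f => ?_)
          constructor
          · intro h
            exact ⟨⟨fun x y hr => h.1 x y ((scc1_iff hvu).2 hr),
              fun a hc => h.2 (some a) (fun hcyc => hc ((cyc1_some hvu).1 hcyc))⟩,
              h.2 none (cyc1_none hvu)⟩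
          · rintro ⟨⟨h1, h2⟩, h3⟩
            refine ⟨fun x y hr => h1 x y ((scc1_iff hvu).1 hr), ?_⟩
            rintro (a | a) hnc
            · exact h3
            · exact h2 a (fun hc => hnc ((cyc1_some hvu).2 hc))
        have hN2 : ∀ q : ℕ,
            Nat.card {f : V → Fin q //
              (∀ x y : V, (sccSetoid (s1 s v) (t1 t u)).r x y → f x = f y) ∧
              (∀ o : Option A, ¬ IsCyclicArc (s1 s v) (t1 t u) o →
                f (s1 s v o) < f (t1 t u o))} =
            Nat.card {f : V → Fin q //
              ((∀ x y : V, (sccSetoid s t).r x y → f x = f y) ∧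
               (∀ a : A, ¬ IsCyclicArc s t a → f (s a) < f (t a))) ∧ f v < f u} := by
          intro q
          refine card_eq_of_iff (fun f => ?_)
          constructor
          · intro h
            exact ⟨⟨fun x y hr => h.1 x y ((scc1_iff huv).2 hr),
              fun a hc => h.2 (some a) (fun hcyc => hc ((cyc1_some huv).1 hcyc))⟩,
              h.2 none (cyc1_none huv)⟩
          · rintro ⟨⟨h1, h2⟩, h3⟩
            refine ⟨fun x y hr => h1 x y ((scc1_iff huv).1 hr), ?_⟩
            rintro (a | a) hnc
            · exact h3
            · exact h2 a (fun hc => hnc ((cyc1_some huv).2 hc))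
        have hN3 : ∀ q : ℕ,
            Nat.card {f : V → Fin q //
              (∀ x y : V, (sccSetoid (s3 s u v) (t3 t u v)).r x y → f x = f y) ∧
              (∀ b : A ⊕ Bool, ¬ IsCyclicArc (s3 s u v) (t3 t u v) b →
                f (s3 s u v b) < f (t3 t u v b))} =
            Nat.card {f : V → Fin q //
              ((∀ x y : V, (sccSetoid s t).r x y → f x = f y) ∧
               (∀ a : A, ¬ IsCyclicArc s t a → f (s a) < f (t a))) ∧ f u = f v} := by
          intro q
          refine card_eq_of_iff (fun f => ?_)
          constructor
          · intro h
            refine ⟨⟨fun x y hr => h.1 x y ((scc3_iff huv hvu).2 (Or.inl hr)),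
              fun a hc => h.2 (Sum.inl a) (fun hcyc => hc ((cyc3_inl huv hvu).1 hcyc))⟩, ?_⟩
            exact h.1 u v ((scc3_iff huv hvu).2 (Or.inr (Or.inl
              ⟨(sccSetoid s t).refl u, (sccSetoid s t).refl v⟩)))
          · rintro ⟨⟨h1, h2⟩, h3⟩
            constructor
            · intro x y hr
              rcases (scc3_iff huv hvu).1 hr with hr' | ⟨ha, hb⟩ | ⟨ha, hb⟩
              · exact h1 x y hr'
              · rw [h1 x u ha, h1 y v hb, h3]
              · rw [h1 x v ha, h1 y u hb, h3]
            · rintro (a | b) hnc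
              · exact h2 a (fun hc => hnc ((cyc3_inl huv hvu).2 hc))
              · exact absurd (cyc3_inr huv hvu b) hnc
        -- cardinalities of quotients
        have hc1 : Nat.card (Quotient (sccSetoid (s1 s u) (t1 t v))) =
            Nat.card (Quotient (sccSetoid s t)) := card_quot1 hvu
        have hc2 : Nat.card (Quotient (sccSetoid (s1 s v) (t1 t u))) =
            Nat.card (Quotient (sccSetoid s t)) := card_quot1 huv
        have hc3 : Nat.card (Quotient (sccSetoid s t)) =
            Nat.card (Quotient (sccSetoid (s3 s u v) (t3 t u v))) + 1 :=
          card_quot3 huv hvu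
        refine ⟨p1 + p2 - p3, ?_, ?_⟩
        · intro q hq
          have e1 := hp1pos q hq
          have e2 := hp2pos q hq
          have e3 := hp3pos q hq
          rw [hW1 q] at e1
          rw [hW2 q] at e2
          rw [hW3 q] at e3
          have hie := card_incl_excl (F := V → Fin q)
            (fun f => ∀ a : A, f (s a) ≤ f (t a)) (fun f => f u) (fun f => f v)
          simp only [Polynomial.eval_add, Polynomial.eval_sub, e1, e2, e3]
          have hie' : ((Nat.card {f : V → Fin q // ∀ a : A, f (s a) ≤ f (t a)} : ℚ) +
              (Nat.card {f : V → Fin q // (∀ a : A, f (s a) ≤ f (t a)) ∧ f u = f v} : ℚ)) =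
              (Nat.card {f : V → Fin q // (∀ a : A, f (s a) ≤ f (t a)) ∧ f u ≤ f v} : ℚ) +
              (Nat.card {f : V → Fin q // (∀ a : A, f (s a) ≤ f (t a)) ∧ f v ≤ f u} : ℚ) := by
            exact_mod_cast congrArg (fun x : ℕ => (x : ℚ)) hie
          linarith
        · intro q hq
          have e1 := hp1neg q hq
          have e2 := hp2neg q hq
          have e3 := hp3neg q hq
          rw [hN1 q, hc1] at e1
          rw [hN2 q, hc2] at e2
          rw [hN3 q] at e3
          have htri := card_trichotomy (F := V → Fin q)
            (fun f => (∀ x y : V, (sccSetoid s t).r x y → f x = f y) ∧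
              (∀ a : A, ¬ IsCyclicArc s t a → f (s a) < f (t a)))
            (fun f => f u) (fun f => f v)
          have htri' : (Nat.card {f : V → Fin q //
              (∀ x y : V, (sccSetoid s t).r x y → f x = f y) ∧
              (∀ a : A, ¬ IsCyclicArc s t a → f (s a) < f (t a))} : ℚ) =
              (Nat.card {f : V → Fin q //
                ((∀ x y : V, (sccSetoid s t).r x y → f x = f y) ∧
                 (∀ a : A, ¬ IsCyclicArc s t a → f (s a) < f (t a))) ∧ f u < f v} : ℚ) +
              (Nat.card {f : V → Fin q //
                ((∀ x y : V, (sccSetoid s t).r x y → f x = f y) ∧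
                 (∀ a : A, ¬ IsCyclicArc s t a → f (s a) < f (t a))) ∧ f v < f u} : ℚ) +
              (Nat.card {f : V → Fin q //
                ((∀ x y : V, (sccSetoid s t).r x y → f x = f y) ∧
                 (∀ a : A, ¬ IsCyclicArc s t a → f (s a) < f (t a))) ∧ f u = f v} : ℚ) := by
            exact_mod_cast congrArg (fun x : ℕ => (x : ℚ)) htri
          have hsign : (-1 : ℚ) ^ (Nat.card (Quotient (sccSetoid s t))) =
              -(-1 : ℚ) ^ (Nat.card (Quotient (sccSetoid (s3 s u v) (t3 t u v)))) := by
            rw [hc3, pow_succ]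
            ring
          simp only [Polynomial.eval_add, Polynomial.eval_sub, e1, e2, e3]
          rw [htri', hsign]
          ring

end Main

end WCR

/-- for a digraph `D = (V,A)` with weak-chromatic polynomial `χ^≥_D`,
for every positive integer `q`, `χ^≥_D(−q) = (−1)^c · N(q)` where `c` is the number of
strongly connected components of `D` and `N(q)` is the number of `q`-colorings constant
on each strongly connected component and strictly increasing along each non-cyclic arc
(i.e. the number of strict-ascent `q`-colorings of `acyc(D)`). -/
theorem weak_chromatic_reciprocity (V A : Type) [Fintype V] [Fintype A]
    (s t : A → V)
    (χ : Polynomial ℚ)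
    (hχ : ∀ q : ℕ, 0 < q → χ.eval (q : ℚ) =
      (Nat.card {f : V → Fin q // ∀ a : A, f (s a) ≤ f (t a)} : ℚ)) :
    ∀ q : ℕ, 0 < q →
      χ.eval (-(q : ℚ)) =
        (-1 : ℚ) ^ (Nat.card (Quotient (sccSetoid s t))) *
        (Nat.card {f : V → Fin q //
          (∀ u v : V, (sccSetoid s t).r u v → f u = f v) ∧
          (∀ a : A, ¬ IsCyclicArc s t a → f (s a) < f (t a))} : ℚ) := by
  obtain ⟨p, hpos, hneg⟩ := WCR.key V (Nat.card {p : V × V // ¬ WCR.Reach s t p.1 p.2})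
    A s t (le_refl _)
  have hroot : {x : ℚ | (χ - p).IsRoot x}.Infinite := by
    refine Set.Infinite.mono ?_ (Set.infinite_range_of_injective
      (f := fun k : ℕ => ((k + 1 : ℕ) : ℚ)) ?_)
    · rintro x ⟨k, rfl⟩
      show (χ - p).IsRoot _
      rw [Polynomial.IsRoot, Polynomial.eval_sub, hχ (k + 1) (Nat.succ_pos k),
        hpos (k + 1) (Nat.succ_pos k), sub_self]
    · intro a b hab
      have : ((a : ℚ) + 1 = (b : ℚ) + 1) := by push_cast at hab; exact_mod_cast hab
      exact_mod_cast add_right_cancel this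
  have hχp : χ = p := by
    have := Polynomial.eq_zero_of_infinite_isRoot _ hroot
    have h2 : χ - p = 0 := this
    linear_combination (norm := ring_nf) h2
  intro q hq
  rw [hχp]
  exact hneg q hq
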